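/- Let F : [α,β] → C^1([0,1],[0,1]) be a family of l-modal maps and let ι₀ be a finite itinerary that is realized by every f_γ: for each γ ∈ [α,β] there exists x(ι₀)(γ) ∈ [0,1] whose itinerary under f_γ equals ι₀. Then for each γ the point x(ι₀)(γ) is unique, and the map γ ↦ x(ι₀)(γ) is continuous on [α,β]. -/

import Mathlib

open Set Metric

noncomputable section

/-- Endpoints of the laps of an `l`-modal map with turning points `c`. -/
def lapPts (l : ℕ) (c : Fin l → ℝ) (i : Fin (l + 2)) : ℝ :=
  if h0 : (i : ℕ) = 0 then 0
  else if hl : (i : ℕ) = l + 1 then 1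
  else c ⟨(i : ℕ) - 1, by have := i.isLt; omega⟩

/-- The `i`-th (closed) lap of an `l`-modal map with turning points `c`. -/
def lap (l : ℕ) (c : Fin l → ℝ) (i : Fin (l + 1)) : Set ℝ :=
  Icc (lapPts l c i.castSucc) (lapPts l c i.succ)

/-- The `j`-th lap as in the paper: `I_1 = [0,c_1)`, `I_j = (c_{j-1},c_j)` and
`I_{l+1} = (c_l,1]`. -/
def openLap (l : ℕ) (c : Fin l → ℝ) (j : Fin (l + 1)) : Set ℝ :=
  Ioo (lapPts l c j.castSucc) (lapPts l c j.succ)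
    ∪ (if (j : ℕ) = 0 then {0} else (∅ : Set ℝ))
    ∪ (if (j : ℕ) = l then {1} else (∅ : Set ℝ))

/-- `f` is an `l`-modal map of `[0,1]` with turning points `c 0 < … < c (l-1)`. -/
def IsLModal (l : ℕ) (f : ℝ → ℝ) (c : Fin l → ℝ) : Prop :=
  StrictMono c ∧ (∀ i, c i ∈ Ioo (0:ℝ) 1) ∧
  MapsTo f (Icc 0 1) (Icc 0 1) ∧
  f 0 ∈ ({0, 1} : Set ℝ) ∧ f 1 ∈ ({0, 1} : Set ℝ) ∧
  ∃ s : Fin (l + 1) → Bool,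
    (∀ i : Fin l, s i.castSucc ≠ s i.succ) ∧
    (∀ i, if s i then StrictMonoOn f (lap l c i) else StrictAntiOn f (lap l c i))

/-- `f` is a `C¹` `l`-modal map with turning points `c`. -/
def IsC1LModal (l : ℕ) (f : ℝ → ℝ) (c : Fin l → ℝ) : Prop :=
  IsLModal l f c ∧ ContDiff ℝ 1 f ∧
  ∀ x ∈ Icc (0:ℝ) 1, (∀ i, x ≠ c i) → deriv f x ≠ 0

/-- Continuity of the family `γ ↦ F γ` on `[a,b]` with respect to the `C¹` topology. -/
def C1FamilyOn (F : ℝ → ℝ → ℝ) (a b : ℝ) : Prop :=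
  ∀ γ₀ ∈ Icc a b, ∀ ε > (0:ℝ), ∃ δ > (0:ℝ), ∀ γ ∈ Icc a b, |γ - γ₀| < δ →
    ∀ x ∈ Icc (0:ℝ) 1, |F γ x - F γ₀ x| < ε ∧ |deriv (F γ) x - deriv (F γ₀) x| < ε

/-- The point `x` realizes, under `f` with turning points `c`, the finite itinerary
consisting of the lap symbols `S 0, …, S (n-1)` followed by the terminal critical symbol
`c j`. -/
def RealizesItin (l : ℕ) (f : ℝ → ℝ) (c : Fin l → ℝ)
    (n : ℕ) (S : Fin n → Fin (l + 1)) (j : Fin l) (x : ℝ) : Prop :=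
  (∀ k : Fin n, f^[(k : ℕ)] x ∈ openLap l c (S k)) ∧ f^[n] x = c j

open Filter
namespace ItinAux

variable {l : ℕ} {c : Fin l → ℝ} {f : ℝ → ℝ}

lemma lapPts_eq_zero (v : Fin (l+2)) (h : (v:ℕ) = 0) : lapPts l c v = 0 := by
  unfold lapPts; rw [dif_pos h]

lemma lapPts_eq_one (v : Fin (l+2)) (h : (v:ℕ) = l+1) : lapPts l c v = 1 := by
  unfold lapPts; rw [dif_neg (by omega), dif_pos h]

lemma lapPts_eq_c (i : Fin l) (v : Fin (l+2)) (h : (v:ℕ) = (i:ℕ)+1) :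
    lapPts l c v = c i := by
  have hi := i.isLt
  unfold lapPts
  rw [dif_neg (by omega), dif_neg (by omega)]
  exact congrArg c (Fin.ext (by simp [h]))

lemma lapPts_strictMono (hc : StrictMono c) (h01 : ∀ i, c i ∈ Ioo (0:ℝ) 1) :
    StrictMono (lapPts l c) := by
  intro m m' h
  have hm := m.isLt
  have hm' := m'.isLt
  have hlt : (m : ℕ) < (m' : ℕ) := h
  unfold lapPts
  split_ifs with h1 h2 h3 h4 h5 h6 h7 h8
  all_goals try omega
  all_goals try exact one_pos
  all_goals try exact (h01 _).1
  all_goals try exact (h01 _).2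
  exact hc (by simp only [Fin.mk_lt_mk]; omega)

lemma lapPts_mem (h01 : ∀ i, c i ∈ Ioo (0:ℝ) 1) (v : Fin (l+2)) :
    lapPts l c v ∈ Icc (0:ℝ) 1 := by
  unfold lapPts
  split_ifs
  · exact ⟨le_rfl, zero_le_one⟩
  · exact ⟨zero_le_one, le_rfl⟩
  · exact ⟨(h01 _).1.le, (h01 _).2.le⟩

lemma openLap_subset_lap (h01 : ∀ i, c i ∈ Ioo (0:ℝ) 1) (i : Fin (l+1)) :
    openLap l c i ⊆ lap l c i := by
  intro x hx
  rcases hx with (hx | hx) | hx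
  · exact Ioo_subset_Icc_self hx
  · split_ifs at hx with h
    · rcases hx with rfl
      have h0 : ((i.castSucc : Fin (l+2)) : ℕ) = 0 := by simpa using h
      refine ⟨le_of_eq (lapPts_eq_zero _ h0), ?_⟩
      exact (lapPts_mem h01 _).1
    · exact absurd hx (Set.notMem_empty x)
  · split_ifs at hx with h
    · rcases hx with rfl
      have h1 : ((i.succ : Fin (l+2)) : ℕ) = l+1 := by simpa using congrArg Nat.succ h
      refine ⟨(lapPts_mem h01 _).2, le_of_eq (lapPts_eq_one _ h1).symm⟩
    · exact absurd hx (Set.notMem_empty x)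

lemma lap_subset_Icc (h01 : ∀ i, c i ∈ Ioo (0:ℝ) 1) (i : Fin (l+1)) :
    lap l c i ⊆ Icc (0:ℝ) 1 :=
  Icc_subset_Icc (lapPts_mem h01 _).1 (lapPts_mem h01 _).2



variable {l : ℕ} {c : Fin l → ℝ} {f : ℝ → ℝ}

lemma injOn_lap (hm : IsLModal l f c) (i : Fin (l+1)) : InjOn f (lap l c i) := by
  obtain ⟨_, _, _, _, _, s, _, hdir⟩ := hm
  have h := hdir i
  cases hb : s i
  · rw [hb] at h; simp only [Bool.false_eq_true, if_false] at h; exact h.injOn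
  · rw [hb] at h; simp only [if_true] at h; exact h.injOn

lemma realizes_mem_Icc {n : ℕ} {S : Fin n → Fin (l+1)} {j : Fin l} {x : ℝ}
    (hm : IsLModal l f c) (h : RealizesItin l f c n S j x) :
    ∀ k ≤ n, f^[k] x ∈ Icc (0:ℝ) 1 := by
  intro k hk
  rcases lt_or_eq_of_le hk with h' | h'
  · exact lap_subset_Icc hm.2.1 _ (openLap_subset_lap hm.2.1 _ (h.1 ⟨k, h'⟩))
  · subst h'
    rw [h.2]
    exact ⟨(hm.2.1 j).1.le, (hm.2.1 j).2.le⟩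

lemma strong_unique {n : ℕ} {S : Fin n → Fin (l+1)} {j : Fin l} {x x₀ : ℝ}
    (hm : IsLModal l f c)
    (h₀ : RealizesItin l f c n S j x₀)
    (hx1 : ∀ k : Fin n, f^[(k:ℕ)] x ∈ lap l c (S k)) (hx2 : f^[n] x = c j) :
    x = x₀ := by
  have key : ∀ k, f^[n - k] x = f^[n - k] x₀ := by
    intro k
    induction k with
    | zero => simpa using hx2.trans h₀.2.symm
    | succ k ih =>
      rcases le_or_gt (k+1) n with h | h
      · have hmn : n - (k+1) < n := by omega
        have hm1 : n - k = (n - (k+1)) + 1 := by omega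
        rw [hm1] at ih
        rw [Function.iterate_succ_apply', Function.iterate_succ_apply'] at ih
        exact injOn_lap hm (S ⟨n - (k+1), hmn⟩)
          (hx1 ⟨n - (k+1), hmn⟩)
          (openLap_subset_lap hm.2.1 _ (h₀.1 ⟨n - (k+1), hmn⟩)) ih
      · have : n - (k+1) = n - k := by omega
        rw [this]; exact ih
  have := key n
  simpa using this

lemma sign_pres {x y : ℝ} (h : |x - y| < |y|) : 0 < x * y := by
  rcases lt_trichotomy y 0 with hy | hy | hy
  · have h1 := abs_lt.1 h
    rw [abs_of_neg hy] at h1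
    exact mul_pos_of_neg_of_neg (by linarith [h1.1, h1.2]) hy
  · subst hy; simp at h; exact absurd h (abs_nonneg x).not_gt
  · have h1 := abs_lt.1 h
    rw [abs_of_pos hy] at h1
    exact mul_pos (by linarith [h1.1]) hy

lemma exists_pos_lt {ι : Type*} [Fintype ι] (g : ι → ℝ) (hg : ∀ i, 0 < g i)
    (r : ℝ) (hr : 0 < r) : ∃ ε > 0, ε < r ∧ ∀ i, ε < g i := by
  classical
  set T : Finset ℝ := insert r (Finset.image g Finset.univ) with hT
  have hne : T.Nonempty := ⟨r, by simp [hT]⟩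
  have hpos : ∀ x ∈ T, 0 < x := by
    intro x hx
    rcases Finset.mem_insert.1 hx with rfl | hx
    · exact hr
    · obtain ⟨i, _, rfl⟩ := Finset.mem_image.1 hx
      exact hg i
  have hinf : 0 < T.inf' hne id := by
    rw [Finset.lt_inf'_iff]
    exact hpos
  refine ⟨T.inf' hne id / 2, by linarith, ?_, ?_⟩
  · have : T.inf' hne id ≤ r := Finset.inf'_le id (by simp [hT])
    linarith
  · intro i
    have : T.inf' hne id ≤ g i := Finset.inf'_le id (by simp [hT])
    linarith

lemma deriv_nonneg_of_mono {u v q : ℝ} (hf : ContDiff ℝ 1 f)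
    (hm : StrictMonoOn f (Icc u v)) (hq : q ∈ Ico u v) : 0 ≤ deriv f q := by
  have hd : HasDerivAt f (deriv f q) q := ((hf.differentiable one_ne_zero) q).hasDerivAt
  have ht := hasDerivAt_iff_tendsto_slope.1 hd
  have ht' : Tendsto (slope f q) (nhdsWithin q (Ioi q)) (nhds (deriv f q)) :=
    ht.mono_left (nhdsWithin_mono _ (fun y hy => ne_of_gt hy))
  refine ge_of_tendsto ht' ?_
  filter_upwards [Ioo_mem_nhdsGT_of_mem (Set.mem_Ico.2 ⟨le_rfl, hq.2⟩)] with y hy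
  rw [slope_def_field]
  apply div_nonneg
  · exact sub_nonneg.2 (hm ⟨hq.1, hq.2.le⟩ ⟨hq.1.trans hy.1.le, hy.2.le⟩ hy.1).le
  · exact sub_nonneg.2 hy.1.le

lemma deriv_nonpos_of_anti {u v q : ℝ} (hf : ContDiff ℝ 1 f)
    (hm : StrictAntiOn f (Icc u v)) (hq : q ∈ Ico u v) : deriv f q ≤ 0 := by
  have hd : HasDerivAt f (deriv f q) q := ((hf.differentiable one_ne_zero) q).hasDerivAt
  have ht := hasDerivAt_iff_tendsto_slope.1 hd
  have ht' : Tendsto (slope f q) (nhdsWithin q (Ioi q)) (nhds (deriv f q)) :=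
    ht.mono_left (nhdsWithin_mono _ (fun y hy => ne_of_gt hy))
  refine le_of_tendsto ht' ?_
  filter_upwards [Ioo_mem_nhdsGT_of_mem (Set.mem_Ico.2 ⟨le_rfl, hq.2⟩)] with y hy
  rw [slope_def_field]
  apply div_nonpos_of_nonpos_of_nonneg
  · exact sub_nonpos.2 (hm ⟨hq.1, hq.2.le⟩ ⟨hq.1.trans hy.1.le, hy.2.le⟩ hy.1).le
  · exact sub_nonneg.2 hy.1.le



variable {l : ℕ}

lemma c_cont {F : ℝ → ℝ → ℝ} {cc : ℝ → Fin l → ℝ} {a b : ℝ}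
    (hfam : C1FamilyOn F a b) (hmodal : ∀ γ ∈ Icc a b, IsC1LModal l (F γ) (cc γ))
    {γ₀ : ℝ} (hγ₀ : γ₀ ∈ Icc a b) :
    ∀ ε > (0:ℝ), ∃ δ > (0:ℝ), ∀ γ ∈ Icc a b, |γ - γ₀| < δ →
      ∀ i, |cc γ i - cc γ₀ i| < ε := by
  intro ε hε
  obtain ⟨hmod₀, hC1₀, hder₀⟩ := hmodal γ₀ hγ₀
  obtain ⟨hcs, h01, hmap, -, -, s, halt, hdir⟩ := hmod₀
  set c₀ := cc γ₀ with hc₀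
  obtain ⟨ε', hε'pos, hε'ε, hbnd⟩ :
      ∃ ε' > 0, ε' < ε ∧ ∀ i : (Fin l ⊕ Fin l) ⊕ Fin l × Fin l,
        ε' < (Sum.elim (Sum.elim (fun i => c₀ i) (fun i => 1 - c₀ i))
          (fun p => if p.1 < p.2 then (c₀ p.2 - c₀ p.1)/2 else 1)) i := by
    apply exists_pos_lt _ _ ε hε
    rintro ((i | i) | ⟨i, k⟩)
    · exact (h01 i).1
    · simpa using (h01 i).2
    · simp only [Sum.elim_inr]
      split_ifs with h
      · have := hcs h; linarith
      · exact one_pos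
  have hbc : ∀ i, ε' < c₀ i := fun i => hbnd (.inl (.inl i))
  have hbc1 : ∀ i, ε' < 1 - c₀ i := fun i => hbnd (.inl (.inr i))
  have hgap : ∀ i k : Fin l, i < k → 2*ε' < c₀ k - c₀ i := by
    intro i k h
    have := hbnd (.inr (i,k))
    simp only [Sum.elim_inr, if_pos h] at this
    linarith
  have hqm0 : ∀ i, 0 < c₀ i - ε' := fun i => by linarith [hbc i]
  have hqp1 : ∀ i, c₀ i + ε' < 1 := fun i => by linarith [hbc1 i]
  have hqmIcc : ∀ i, c₀ i - ε' ∈ Icc (0:ℝ) 1 :=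
    fun i => ⟨(hqm0 i).le, by linarith [(h01 i).2]⟩
  have hqpIcc : ∀ i, c₀ i + ε' ∈ Icc (0:ℝ) 1 :=
    fun i => ⟨by linarith [(h01 i).1], (hqp1 i).le⟩
  have hqm_ne : ∀ i k, c₀ i - ε' ≠ c₀ k := by
    intro i k
    rcases lt_trichotomy k i with h | h | h
    · have := hgap k i h; intro he; linarith
    · subst h; intro he; linarith
    · have := hcs h; intro he; linarith
  have hqp_ne : ∀ i k, c₀ i + ε' ≠ c₀ k := by
    intro i k
    rcases lt_trichotomy k i with h | h | h
    · have := hcs h; intro he; linarith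
    · subst h; intro he; linarith
    · have := hgap i k h; intro he; linarith
  have hdm_ne : ∀ i, deriv (F γ₀) (c₀ i - ε') ≠ 0 :=
    fun i => hder₀ _ (hqmIcc i) (hqm_ne i)
  have hdp_ne : ∀ i, deriv (F γ₀) (c₀ i + ε') ≠ 0 :=
    fun i => hder₀ _ (hqpIcc i) (hqp_ne i)
  -- location of q-points inside the laps adjacent to c₀ i
  have hlow : ∀ i : Fin l,
      lapPts l c₀ ((i.castSucc : Fin (l+1)).castSucc) < c₀ i - ε' := by
    intro i
    by_cases h0 : (i:ℕ) = 0
    · rw [lapPts_eq_zero _ (by simp [h0])]; exact hqm0 i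
    · have hi := i.isLt
      rw [lapPts_eq_c ⟨(i:ℕ)-1, by omega⟩ _ (by simp; omega)]
      have := hgap ⟨(i:ℕ)-1, by omega⟩ i (by simp [Fin.lt_def]; omega)
      linarith
  have hmid1 : ∀ i : Fin l, lapPts l c₀ ((i.castSucc : Fin (l+1)).succ) = c₀ i :=
    fun i => lapPts_eq_c i _ (by simp)
  have hmid2 : ∀ i : Fin l, lapPts l c₀ ((i.succ : Fin (l+1)).castSucc) = c₀ i :=
    fun i => lapPts_eq_c i _ (by simp)
  have hhigh : ∀ i : Fin l, c₀ i + ε' < lapPts l c₀ ((i.succ : Fin (l+1)).succ) := by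
    intro i
    have hi := i.isLt
    by_cases h0 : (i:ℕ)+1 = l
    · rw [lapPts_eq_one _ (by simp; omega)]; exact hqp1 i
    · rw [lapPts_eq_c ⟨(i:ℕ)+1, by omega⟩ _ (by simp)]
      have := hgap i ⟨(i:ℕ)+1, by omega⟩ (by simp [Fin.lt_def])
      linarith
  -- opposite signs of the derivative of F γ₀ at the two q-points
  have hopp : ∀ i : Fin l,
      deriv (F γ₀) (c₀ i - ε') * deriv (F γ₀) (c₀ i + ε') < 0 := by
    intro i
    have hd1 := hdir i.castSucc
    have hd2 := hdir i.succ
    have hne := halt i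
    have hqmIco : c₀ i - ε' ∈ Ico (lapPts l c₀ ((i.castSucc : Fin (l+1)).castSucc))
        (lapPts l c₀ ((i.castSucc : Fin (l+1)).succ)) := by
      refine ⟨(hlow i).le, ?_⟩; rw [hmid1 i]; linarith
    have hqpIco : c₀ i + ε' ∈ Ico (lapPts l c₀ ((i.succ : Fin (l+1)).castSucc))
        (lapPts l c₀ ((i.succ : Fin (l+1)).succ)) := by
      refine ⟨?_, hhigh i⟩; rw [hmid2 i]; linarith
    cases hb : s i.castSucc
    · rw [hb] at hd1
      have hb2 : s i.succ = true := by
        revert hne; rw [hb]; cases s i.succ <;> simp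
      rw [hb2] at hd2
      simp only [Bool.false_eq_true, if_false, if_true] at hd1 hd2
      have h1 : deriv (F γ₀) (c₀ i - ε') < 0 :=
        lt_of_le_of_ne (deriv_nonpos_of_anti hC1₀ hd1 hqmIco) (hdm_ne i)
      have h2 : 0 < deriv (F γ₀) (c₀ i + ε') :=
        lt_of_le_of_ne (deriv_nonneg_of_mono hC1₀ hd2 hqpIco) (hdp_ne i).symm
      exact mul_neg_of_neg_of_pos h1 h2
    · rw [hb] at hd1
      have hb2 : s i.succ = false := by
        revert hne; rw [hb]; cases s i.succ <;> simp
      rw [hb2] at hd2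
      simp only [Bool.false_eq_true, if_false, if_true] at hd1 hd2
      have h1 : 0 < deriv (F γ₀) (c₀ i - ε') :=
        lt_of_le_of_ne (deriv_nonneg_of_mono hC1₀ hd1 hqmIco) (hdm_ne i).symm
      have h2 : deriv (F γ₀) (c₀ i + ε') < 0 :=
        lt_of_le_of_ne (deriv_nonpos_of_anti hC1₀ hd2 hqpIco) (hdp_ne i)
      exact mul_neg_of_pos_of_neg h1 h2
  -- lower bound on |deriv| at the q-points
  obtain ⟨m, hm0, -, hmlt⟩ := exists_pos_lt
    (Sum.elim (fun i : Fin l => |deriv (F γ₀) (c₀ i - ε')|)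
      (fun i : Fin l => |deriv (F γ₀) (c₀ i + ε')|))
    (by rintro (i | i)
        · simpa [abs_pos] using hdm_ne i
        · simpa [abs_pos] using hdp_ne i) 1 one_pos
  obtain ⟨δ, hδ, hδ'⟩ := hfam γ₀ hγ₀ m hm0
  refine ⟨δ, hδ, ?_⟩
  intro γ hγ hγδ
  have key : ∀ i : Fin l, ∃ k : Fin l, cc γ k ∈ Ioo (c₀ i - ε') (c₀ i + ε') := by
    intro i
    have h1 := (hδ' γ hγ hγδ _ (hqmIcc i)).2
    have h2 := (hδ' γ hγ hγδ _ (hqpIcc i)).2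
    have s1 : 0 < deriv (F γ) (c₀ i - ε') * deriv (F γ₀) (c₀ i - ε') :=
      sign_pres (h1.trans (hmlt (.inl i)))
    have s2 : 0 < deriv (F γ) (c₀ i + ε') * deriv (F γ₀) (c₀ i + ε') :=
      sign_pres (h2.trans (hmlt (.inr i)))
    have sopp : deriv (F γ) (c₀ i - ε') * deriv (F γ) (c₀ i + ε') < 0 := by
      nlinarith [hopp i]
    have hcont : Continuous (deriv (F γ)) := (hmodal γ hγ).2.1.continuous_deriv le_rfl
    have hlt : c₀ i - ε' ≤ c₀ i + ε' := by linarith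
    have hzero : ∃ x ∈ Ioo (c₀ i - ε') (c₀ i + ε'), deriv (F γ) x = 0 := by
      rcases mul_neg_iff.1 sopp with ⟨h3, h4⟩ | ⟨h3, h4⟩
      · obtain ⟨x, hx, hx0⟩ := intermediate_value_Ioo' hlt hcont.continuousOn
          (show (0:ℝ) ∈ Ioo (deriv (F γ) (c₀ i + ε')) (deriv (F γ) (c₀ i - ε')) from ⟨h4, h3⟩)
        exact ⟨x, hx, hx0⟩
      · obtain ⟨x, hx, hx0⟩ := intermediate_value_Ioo hlt hcont.continuousOn
          (show (0:ℝ) ∈ Ioo (deriv (F γ) (c₀ i - ε')) (deriv (F γ) (c₀ i + ε')) from ⟨h3, h4⟩)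
        exact ⟨x, hx, hx0⟩
    obtain ⟨x, hxIoo, hx0⟩ := hzero
    have hxIcc : x ∈ Icc (0:ℝ) 1 :=
      ⟨((hqm0 i).trans hxIoo.1).le, (hxIoo.2.trans (hqp1 i)).le⟩
    have : ∃ k, x = cc γ k := by
      by_contra hno; push_neg at hno
      exact (hmodal γ hγ).2.2 x hxIcc hno hx0
    rcases this with ⟨k, hkx⟩
    exact ⟨k, hkx ▸ hxIoo⟩
  choose k hk using key
  have hkmono : StrictMono k := by
    intro i i' hii
    have h1 := (hk i).2
    have h2 := (hk i').1
    have hg := hgap i i' hii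
    have hlt : cc γ (k i) < cc γ (k i') := by linarith
    exact ((hmodal γ hγ).1.1.lt_iff_lt).1 hlt
  have hwf : WellFoundedLT (Fin l) := inferInstance
  have hge : ∀ x, x ≤ k x := fun x => @StrictMono.le_apply _ _ hwf k hkmono x
  have hk' : StrictMono (fun i : Fin l => (k i.rev).rev) := by
    intro i j hij
    simp only
    rw [Fin.rev_lt_rev]
    exact hkmono (Fin.rev_lt_rev.2 hij)
  have hle : ∀ x, k x ≤ x := by
    intro x
    have h := @StrictMono.le_apply _ _ hwf _ hk' (x := x.rev)
    simp only [Fin.rev_rev] at h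
    exact Fin.rev_le_rev.1 h
  intro i
  have hki := hk i
  rw [le_antisymm (hle i) (hge i)] at hki
  exact abs_lt.2 ⟨by linarith [hki.1], by linarith [hki.2]⟩



variable {l : ℕ}

lemma limit_realizes {n : ℕ} {F : ℝ → ℝ → ℝ} {cc : ℝ → Fin l → ℝ} {a b : ℝ}
    {S : Fin n → Fin (l + 1)} {j : Fin l}
    (hfam : C1FamilyOn F a b)
    (hmodal : ∀ γ ∈ Icc a b, IsC1LModal l (F γ) (cc γ))
    {γ₀ : ℝ} (hγ₀ : γ₀ ∈ Icc a b)
    {γs : ℕ → ℝ} (hγs : ∀ m, γs m ∈ Icc a b) (hγlim : Tendsto γs atTop (nhds γ₀))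
    {xs : ℕ → ℝ} {xst x₀ : ℝ} (hxlim : Tendsto xs atTop (nhds xst))
    (hxs : ∀ m, RealizesItin l (F (γs m)) (cc (γs m)) n S j (xs m))
    (h₀ : RealizesItin l (F γ₀) (cc γ₀) n S j x₀) : xst = x₀ := by
  have hFcont : Continuous (F γ₀) := (hmodal γ₀ hγ₀).2.1.continuous
  have hiterIcc : ∀ m, ∀ k ≤ n, (F (γs m))^[k] (xs m) ∈ Icc (0:ℝ) 1 :=
    fun m => realizes_mem_Icc (hmodal (γs m) (hγs m)).1 (hxs m)
  have hγev : ∀ δ > (0:ℝ), ∀ᶠ m in atTop, |γs m - γ₀| < δ := by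
    intro δ hδ
    have := Metric.tendsto_nhds.1 hγlim δ hδ
    simpa [Real.dist_eq] using this
  have hconv : ∀ k, k ≤ n →
      Tendsto (fun m => (F (γs m))^[k] (xs m)) atTop (nhds ((F γ₀)^[k] xst)) := by
    intro k
    induction k with
    | zero => intro _; simpa using hxlim
    | succ k ih =>
      intro hk
      have hk' : k ≤ n := by omega
      have hy := ih hk'
      have hymem : ∀ m, (F (γs m))^[k] (xs m) ∈ Icc (0:ℝ) 1 := fun m => hiterIcc m k hk'
      have h1 : Tendsto (fun m => F γ₀ ((F (γs m))^[k] (xs m))) atTop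
          (nhds (F γ₀ ((F γ₀)^[k] xst))) := (hFcont.tendsto _).comp hy
      have h2 : Tendsto (fun m => dist (F γ₀ ((F (γs m))^[k] (xs m)))
          (F (γs m) ((F (γs m))^[k] (xs m)))) atTop (nhds 0) := by
        rw [Metric.tendsto_atTop]
        intro ε hε
        obtain ⟨δ, hδ, hδ'⟩ := hfam γ₀ hγ₀ ε hε
        obtain ⟨N, hN⟩ := (hγev δ hδ).exists_forall_of_atTop
        refine ⟨N, fun m hm => ?_⟩
        have := (hδ' (γs m) (hγs m) (hN m hm) _ (hymem m)).1
        rw [Real.dist_0_eq_abs, abs_of_nonneg dist_nonneg, Real.dist_eq]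
        rwa [abs_sub_comm]
      have h3 := h1.congr_dist h2
      simp only [Function.iterate_succ_apply']
      exact h3
  have hclim : ∀ i, Tendsto (fun m => cc (γs m) i) atTop (nhds (cc γ₀ i)) := by
    intro i
    rw [Metric.tendsto_atTop]
    intro ε hε
    obtain ⟨δ, hδ, hδ'⟩ := c_cont hfam hmodal hγ₀ ε hε
    obtain ⟨N, hN⟩ := (hγev δ hδ).exists_forall_of_atTop
    exact ⟨N, fun m hm => by
      rw [Real.dist_eq]; exact hδ' (γs m) (hγs m) (hN m hm) i⟩
  have hlapPts_lim : ∀ v : Fin (l+2),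
      Tendsto (fun m => lapPts l (cc (γs m)) v) atTop (nhds (lapPts l (cc γ₀) v)) := by
    intro v
    unfold lapPts
    split_ifs
    · exact tendsto_const_nhds
    · exact tendsto_const_nhds
    · exact hclim _
  have hlapmem : ∀ k : Fin n, (F γ₀)^[(k:ℕ)] xst ∈ lap l (cc γ₀) (S k) := by
    intro k
    have hmem : ∀ m, (F (γs m))^[(k:ℕ)] (xs m) ∈ lap l (cc (γs m)) (S k) :=
      fun m => openLap_subset_lap (hmodal (γs m) (hγs m)).1.2.1 _ ((hxs m).1 k)
    have hc := hconv (k:ℕ) k.isLt.le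
    constructor
    · exact le_of_tendsto_of_tendsto' (hlapPts_lim _) hc (fun m => (hmem m).1)
    · exact le_of_tendsto_of_tendsto' hc (hlapPts_lim _) (fun m => (hmem m).2)
  have hend : (F γ₀)^[n] xst = cc γ₀ j := by
    have h1 : Tendsto (fun m => cc (γs m) j) atTop (nhds ((F γ₀)^[n] xst)) :=
      (hconv n le_rfl).congr (fun m => (hxs m).2)
    exact tendsto_nhds_unique h1 (hclim j)
  exact strong_unique (hmodal γ₀ hγ₀).1 h₀ hlapmem hend

end ItinAux

/-- If a finite itinerary is realized by every map of a `C¹`-continuous family of `l`-modal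
maps, then the realizing point is unique and depends continuously on the parameter. -/
theorem finite_itinerary_point_unique_continuous
    (l n : ℕ) (F : ℝ → ℝ → ℝ) (c : ℝ → Fin l → ℝ) (a b : ℝ)
    (S : Fin n → Fin (l + 1)) (j : Fin l)
    (hfam : C1FamilyOn F a b)
    (hmodal : ∀ γ ∈ Icc a b, IsC1LModal l (F γ) (c γ))
    (hreal : ∀ γ ∈ Icc a b, ∃ x ∈ Icc (0:ℝ) 1, RealizesItin l (F γ) (c γ) n S j x) :
    (∀ γ ∈ Icc a b, ∀ x₁ x₂ : ℝ,
      RealizesItin l (F γ) (c γ) n S j x₁ → RealizesItin l (F γ) (c γ) n S j x₂ →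
        x₁ = x₂) ∧
    ∃ xf : ℝ → ℝ, ContinuousOn xf (Icc a b) ∧
      ∀ γ ∈ Icc a b, RealizesItin l (F γ) (c γ) n S j (xf γ) := by
  classical
  have huniq : ∀ γ ∈ Icc a b, ∀ x₁ x₂ : ℝ,
      RealizesItin l (F γ) (c γ) n S j x₁ → RealizesItin l (F γ) (c γ) n S j x₂ →
        x₁ = x₂ := by
    intro γ hγ x₁ x₂ h1 h2
    exact ItinAux.strong_unique (hmodal γ hγ).1 h2
      (fun k => ItinAux.openLap_subset_lap (hmodal γ hγ).1.2.1 _ (h1.1 k)) h1.2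
  refine ⟨huniq, ?_⟩
  set xf : ℝ → ℝ := fun γ => if h : γ ∈ Icc a b then (hreal γ h).choose else 0 with hxf
  have hxf1 : ∀ γ (h : γ ∈ Icc a b), xf γ ∈ Icc (0:ℝ) 1 := by
    intro γ h; rw [hxf]; simp only [dif_pos h]; exact (hreal γ h).choose_spec.1
  have hxf2 : ∀ γ (h : γ ∈ Icc a b), RealizesItin l (F γ) (c γ) n S j (xf γ) := by
    intro γ h; rw [hxf]; simp only [dif_pos h]; exact (hreal γ h).choose_spec.2
  refine ⟨xf, ?_, fun γ hγ => hxf2 γ hγ⟩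
  intro γ₀ hγ₀
  rw [Metric.continuousWithinAt_iff]
  by_contra hcon
  push_neg at hcon
  obtain ⟨ε₀, hε₀, hbad⟩ := hcon
  choose γs hγs hdist hfar using fun m : ℕ =>
    hbad (1/((m:ℝ)+1)) (by positivity)
  have hγlim : Tendsto γs atTop (nhds γ₀) := by
    rw [Metric.tendsto_atTop]
    intro ε hε
    obtain ⟨N, hN⟩ := exists_nat_one_div_lt hε
    refine ⟨N, fun m hm => ?_⟩
    refine lt_of_lt_of_le (hdist m) (le_trans ?_ hN.le)
    apply one_div_le_one_div_of_le (by positivity)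
    have : (N:ℝ) ≤ (m:ℝ) := Nat.cast_le.2 hm
    linarith
  obtain ⟨xst, hxstmem, φ, hφ, hxconv⟩ :=
    isCompact_Icc.tendsto_subseq (fun m => hxf1 (γs m) (hγs m))
  have heq : xst = xf γ₀ := by
    refine ItinAux.limit_realizes hfam hmodal hγ₀ (fun m => hγs (φ m))
      (hγlim.comp hφ.tendsto_atTop) hxconv (fun m => hxf2 _ (hγs (φ m))) (hxf2 γ₀ hγ₀)
  rw [heq] at hxconv
  have : ∀ᶠ m in atTop, dist (xf (γs (φ m))) (xf γ₀) < ε₀ :=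
    (Metric.tendsto_nhds.1 hxconv) ε₀ hε₀
  obtain ⟨m, hm⟩ := this.exists
  exact absurd hm (not_lt.2 (hfar (φ m)))
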